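/- (Lyapunov-type characterization) Let X be a Banach space and let U be an evolution operator on X with exponential decay. Then U is weakly exponentially unstable if and only if there exist a Lyapunov function L : T × X → ℝ₋ for U taking nonpositive values and a constant m > 0 such that for each x₀ ∈ X there is t₀ ≥ 0 with |L(t,t₀,x₀)| ≤ m‖U(t,t₀)x₀‖² for all t ≥ t₀ (the same t₀ for which L solves the Lyapunov equation). -/

import Mathlib

/-- An evolution operator on a Banach space `X`. -/
structure EvolutionOperator (X : Type*) [NormedAddCommGroup X] [NormedSpace ℝ X] where
  U : ℝ → ℝ → X →L[ℝ] X
  isId : ∀ t : ℝ, 0 ≤ t → U t t = ContinuousLinearMap.id ℝ X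
  cocycle : ∀ t s t₀ : ℝ, 0 ≤ t₀ → t₀ ≤ s → s ≤ t → ∀ x : X, U t s (U s t₀ x) = U t t₀ x
  cont : ∀ x : X, ContinuousOn (fun p : ℝ × ℝ => U p.1 p.2 x)
    {p : ℝ × ℝ | 0 ≤ p.2 ∧ p.2 ≤ p.1}

/-- `U` is weakly exponentially unstable. -/
def WeakExpUnstable {X : Type*} [NormedAddCommGroup X] [NormedSpace ℝ X]
    (E : EvolutionOperator X) : Prop :=
  ∃ N : ℝ, 1 ≤ N ∧ ∃ ν : ℝ, 0 < ν ∧ ∀ x₀ : X, ∃ t₀ : ℝ, 0 ≤ t₀ ∧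
    ∀ s t : ℝ, t₀ ≤ s → s ≤ t →
      N * ‖E.U t t₀ x₀‖ ≥ Real.exp (ν * (t - s)) * ‖E.U s t₀ x₀‖

/-- `U` has exponential decay. -/
def ExpDecay {X : Type*} [NormedAddCommGroup X] [NormedSpace ℝ X]
    (E : EvolutionOperator X) : Prop :=
  ∃ M : ℝ, 1 ≤ M ∧ ∃ ω : ℝ, 0 < ω ∧ ∀ t t₀ : ℝ, 0 ≤ t₀ → t₀ ≤ t → ∀ x₀ : X,
    M * ‖E.U t t₀ x₀‖ ≥ Real.exp (-ω * (t - t₀)) * ‖x₀‖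

open MeasureTheory

private lemma integral_exp_linear (c d a b : ℝ) (hc : c ≠ 0) :
    ∫ τ in a..b, Real.exp (c * τ + d) = (Real.exp (c * b + d) - Real.exp (c * a + d)) / c := by
  have h : ∀ x ∈ Set.uIcc a b,
      HasDerivAt (fun τ => Real.exp (c * τ + d) / c) (Real.exp (c * x + d)) x := by
    intro x _
    have h1 : HasDerivAt (fun τ : ℝ => c * τ + d) c x := by
      simpa using ((hasDerivAt_id x).const_mul c).add_const d
    have h2 := (Real.hasDerivAt_exp (c * x + d)).comp x h1
    have h3 := h2.div_const c
    simpa [mul_div_assoc, div_self hc] using h3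
  rw [intervalIntegral.integral_eq_sub_of_hasDerivAt h
    ((Real.continuous_exp.comp (by continuity)).intervalIntegrable a b)]
  ring

private lemma EvolutionOperator.contOn_normSq {X : Type*} [NormedAddCommGroup X] [NormedSpace ℝ X]
    (E : EvolutionOperator X) (t₀ : ℝ) (ht₀ : 0 ≤ t₀) (x₀ : X) :
    ContinuousOn (fun τ => ‖E.U τ t₀ x₀‖ ^ 2) (Set.Ici t₀) := by
  have h1 : ContinuousOn (fun τ : ℝ => E.U τ t₀ x₀) (Set.Ici t₀) := by
    have h0 : ContinuousOn (fun τ : ℝ => (τ, t₀)) (Set.Ici t₀) :=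
      (continuous_id.prodMk continuous_const).continuousOn
    exact (E.cont x₀).comp h0 (fun τ hτ => ⟨ht₀, hτ⟩)
  exact (h1.norm).pow 2

private lemma EvolutionOperator.intInt_normSq {X : Type*} [NormedAddCommGroup X] [NormedSpace ℝ X]
    (E : EvolutionOperator X) (t₀ : ℝ) (ht₀ : 0 ≤ t₀) (x₀ : X) {a b : ℝ}
    (ha : t₀ ≤ a) (hb : t₀ ≤ b) :
    IntervalIntegrable (fun τ => ‖E.U τ t₀ x₀‖ ^ 2) volume a b := by
  refine ((E.contOn_normSq t₀ ht₀ x₀).mono ?_).intervalIntegrable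
  intro x hx
  exact le_trans (le_min ha hb) hx.1

private theorem fwd_aux {X : Type*} [NormedAddCommGroup X] [NormedSpace ℝ X]
    (E : EvolutionOperator X) (hw : WeakExpUnstable E) :
      ∃ L : ℝ → ℝ → X → ℝ, ∃ m : ℝ, 0 < m ∧
        (∀ t s : ℝ, ∀ x : X, 0 ≤ s → s ≤ t → L t s x ≤ 0) ∧
        ∀ x₀ : X, ∃ t₀ : ℝ, 0 ≤ t₀ ∧
          (∀ s t : ℝ, t₀ ≤ s → s ≤ t →
            L t t₀ x₀ + (∫ τ in s..t, ‖E.U τ t₀ x₀‖ ^ 2) = L s t₀ x₀) ∧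
          (∀ t : ℝ, t₀ ≤ t → |L t t₀ x₀| ≤ m * ‖E.U t t₀ x₀‖ ^ 2) := by
  obtain ⟨N, hN, ν, hν, h⟩ := hw
  refine ⟨fun t s x => -(∫ τ in s..t, ‖E.U τ s x‖ ^ 2), N ^ 2 / (2 * ν), by positivity, ?_, ?_⟩
  · intro t s x hs hst
    simp only [neg_nonpos]
    exact intervalIntegral.integral_nonneg hst (fun u _ => by positivity)
  · intro x₀
    obtain ⟨t₀, ht₀, hx⟩ := h x₀
    refine ⟨t₀, ht₀, ?_, ?_⟩
    · intro s t hs hst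
      have h1 := E.intInt_normSq t₀ ht₀ x₀ le_rfl hs
      have h2 := E.intInt_normSq t₀ ht₀ x₀ hs (hs.trans hst)
      have h3 := intervalIntegral.integral_add_adjacent_intervals h1 h2
      simp only []
      linarith [h3]
    · intro t ht
      have hnn : 0 ≤ ∫ τ in t₀..t, ‖E.U τ t₀ x₀‖ ^ 2 :=
        intervalIntegral.integral_nonneg ht (fun u _ => by positivity)
      simp only []
      rw [abs_of_nonpos (by linarith), neg_neg]
      set b := ‖E.U t t₀ x₀‖ with hb
      have hmono : (∫ τ in t₀..t, ‖E.U τ t₀ x₀‖ ^ 2)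
          ≤ ∫ τ in t₀..t, N ^ 2 * b ^ 2 * Real.exp (2 * ν * τ + -(2 * ν * t)) := by
        refine intervalIntegral.integral_mono_on ht (E.intInt_normSq t₀ ht₀ x₀ le_rfl ht)
          (Continuous.intervalIntegrable (by continuity) _ _) ?_
        intro τ hτ
        have h4 : Real.exp (ν * (t - τ)) * ‖E.U τ t₀ x₀‖ ≤ N * b := hx τ t hτ.1 hτ.2
        have h5 : (Real.exp (ν * (t - τ)) * ‖E.U τ t₀ x₀‖) ^ 2 ≤ (N * b) ^ 2 :=
          pow_le_pow_left₀ (by positivity) h4 2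
        have hE : Real.exp (ν * (t - τ)) ^ 2 * Real.exp (2 * ν * τ + -(2 * ν * t)) = 1 := by
          rw [sq, ← Real.exp_add, ← Real.exp_add,
            show ν * (t - τ) + ν * (t - τ) + (2 * ν * τ + -(2 * ν * t)) = 0 by ring,
            Real.exp_zero]
        calc ‖E.U τ t₀ x₀‖ ^ 2
            = ‖E.U τ t₀ x₀‖ ^ 2 * (Real.exp (ν * (t - τ)) ^ 2
                * Real.exp (2 * ν * τ + -(2 * ν * t))) := by rw [hE, mul_one]
          _ = (Real.exp (ν * (t - τ)) * ‖E.U τ t₀ x₀‖) ^ 2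
                * Real.exp (2 * ν * τ + -(2 * ν * t)) := by ring
          _ ≤ (N * b) ^ 2 * Real.exp (2 * ν * τ + -(2 * ν * t)) :=
              mul_le_mul_of_nonneg_right h5 (Real.exp_pos _).le
          _ = N ^ 2 * b ^ 2 * Real.exp (2 * ν * τ + -(2 * ν * t)) := by ring
      have hci : (∫ τ in t₀..t, N ^ 2 * b ^ 2 * Real.exp (2 * ν * τ + -(2 * ν * t)))
          = N ^ 2 * b ^ 2 * ((Real.exp (2 * ν * t + -(2 * ν * t))
              - Real.exp (2 * ν * t₀ + -(2 * ν * t))) / (2 * ν)) := by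
        rw [intervalIntegral.integral_const_mul, integral_exp_linear _ _ _ _ (by positivity)]
      rw [hci, show 2 * ν * t + -(2 * ν * t) = 0 by ring, Real.exp_zero] at hmono
      have hex := Real.exp_pos (2 * ν * t₀ + -(2 * ν * t))
      have hz : (0:ℝ) < (2 * ν)⁻¹ := by positivity
      have hfin : N ^ 2 * b ^ 2 * ((1 - Real.exp (2 * ν * t₀ + -(2 * ν * t))) / (2 * ν))
          ≤ N ^ 2 / (2 * ν) * b ^ 2 := by
        rw [div_eq_mul_inv, div_eq_mul_inv]
        nlinarith [mul_nonneg (mul_nonneg (mul_nonneg (sq_nonneg N) (sq_nonneg b)) hex.le) hz.le]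
      linarith

private theorem bwd_aux {X : Type*} [NormedAddCommGroup X] [NormedSpace ℝ X]
    (E : EvolutionOperator X) (hdecay : ExpDecay E)
    (hyp : ∃ L : ℝ → ℝ → X → ℝ, ∃ m : ℝ, 0 < m ∧
        (∀ t s : ℝ, ∀ x : X, 0 ≤ s → s ≤ t → L t s x ≤ 0) ∧
        ∀ x₀ : X, ∃ t₀ : ℝ, 0 ≤ t₀ ∧
          (∀ s t : ℝ, t₀ ≤ s → s ≤ t →
            L t t₀ x₀ + (∫ τ in s..t, ‖E.U τ t₀ x₀‖ ^ 2) = L s t₀ x₀) ∧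
          (∀ t : ℝ, t₀ ≤ t → |L t t₀ x₀| ≤ m * ‖E.U t t₀ x₀‖ ^ 2)) :
    WeakExpUnstable E := by
  obtain ⟨L, m, hm, hLnp, hL⟩ := hyp
  obtain ⟨M, hM1, ω, hω, hdec⟩ := hdecay
  have hM0 : (0:ℝ) < M := lt_of_lt_of_le one_pos hM1
  have hlog2 : (0:ℝ) < Real.log 2 := Real.log_pos one_lt_two
  set ν := Real.log 2 / (2 * m) with hνdef
  have hν : 0 < ν := by positivity
  set c₀ := (1 - Real.exp (-(2 * ω))) / (2 * ω * M ^ 2) with hc₀def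
  have hexlt : Real.exp (-(2 * ω)) < 1 := Real.exp_lt_one_iff.2 (by linarith)
  have hc₀ : 0 < c₀ := div_pos (by linarith) (by positivity)
  set N₁ := Real.exp ν * Real.sqrt (2 * m / c₀) with hN₁def
  have hN₁0 : 0 ≤ N₁ := by positivity
  set N := max (max N₁ (M * Real.exp (ω + ν))) 1 with hNdef
  refine ⟨N, le_max_right _ _, ν, hν, ?_⟩
  intro x₀
  obtain ⟨t₀, ht₀, heq, hbd⟩ := hL x₀
  refine ⟨t₀, ht₀, ?_⟩
  have hφeq : ∀ a b : ℝ, t₀ ≤ a → a ≤ b →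
      -(L b t₀ x₀) = -(L a t₀ x₀) + ∫ τ in a..b, ‖E.U τ t₀ x₀‖ ^ 2 := by
    intro a b ha hab; have := heq a b ha hab; linarith
  have hφ0 : ∀ a, t₀ ≤ a → 0 ≤ -(L a t₀ x₀) := by
    intro a ha
    have := hLnp a t₀ x₀ ht₀ ha
    linarith
  have hφm : ∀ a, t₀ ≤ a → -(L a t₀ x₀) ≤ m * ‖E.U a t₀ x₀‖ ^ 2 := by
    intro a ha
    have h1 := hbd a ha
    have h2 := neg_abs_le (L a t₀ x₀)
    linarith
  have hmono : ∀ a b, t₀ ≤ a → a ≤ b → -(L a t₀ x₀) ≤ -(L b t₀ x₀) := by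
    intro a b ha hab
    have hint : 0 ≤ ∫ τ in a..b, ‖E.U τ t₀ x₀‖ ^ 2 :=
      intervalIntegral.integral_nonneg hab (fun u _ => by positivity)
    have := hφeq a b ha hab; linarith
  have hstep : ∀ a b, t₀ ≤ a → a ≤ b →
      (1 + (b - a) / m) * (-(L a t₀ x₀)) ≤ -(L b t₀ x₀) := by
    intro a b ha hab
    have hlow : ∀ τ ∈ Set.Icc a b, -(L a t₀ x₀) / m ≤ ‖E.U τ t₀ x₀‖ ^ 2 := by
      intro τ hτ
      have h1 := hmono a τ ha hτ.1
      have h2 := hφm τ (ha.trans hτ.1)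
      rw [div_le_iff₀ hm]
      nlinarith
    have hint : (∫ τ in a..b, -(L a t₀ x₀) / m) ≤ ∫ τ in a..b, ‖E.U τ t₀ x₀‖ ^ 2 :=
      intervalIntegral.integral_mono_on hab intervalIntegrable_const
        (E.intInt_normSq t₀ ht₀ x₀ ha (ha.trans hab)) hlow
    rw [intervalIntegral.integral_const, smul_eq_mul] at hint
    have hexp : (1 + (b - a) / m) * (-(L a t₀ x₀))
        = -(L a t₀ x₀) + (b - a) * (-(L a t₀ x₀) / m) := by
      field_simp; ring
    have := hφeq a b ha hab
    linarith
  have hiter : ∀ k : ℕ, ∀ a, t₀ ≤ a →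
      2 ^ k * (-(L a t₀ x₀)) ≤ -(L (a + k * m) t₀ x₀) := by
    intro k
    induction k with
    | zero => intro a ha; simp
    | succ k ih =>
      intro a ha
      have h1 := ih a ha
      have hakm : t₀ ≤ a + k * m := le_trans ha (le_add_of_nonneg_right (by positivity))
      have h2 := hstep (a + k * m) (a + k * m + m) hakm (by linarith)
      rw [show (a + k * m + m - (a + k * m)) = m by ring, div_self hm.ne'] at h2
      have hc : a + ((k:ℕ)+1 : ℕ) * m = a + k * m + m := by push_cast; ring
      rw [hc]
      calc (2:ℝ) ^ (k+1) * (-(L a t₀ x₀)) = 2 * (2 ^ k * (-(L a t₀ x₀))) := by ring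
        _ ≤ 2 * (-(L (a + k * m) t₀ x₀)) := by linarith
        _ = (1 + 1) * (-(L (a + k * m) t₀ x₀)) := by ring
        _ ≤ -(L (a + k * m + m) t₀ x₀) := h2
  have hgrow : ∀ a b, t₀ ≤ a → a ≤ b →
      Real.exp (2 * ν * (b - a)) * (-(L a t₀ x₀)) ≤ 2 * (-(L b t₀ x₀)) := by
    intro a b ha hab
    set k := ⌊(b - a) / m⌋₊ with hk
    have hba : (0:ℝ) ≤ (b - a) / m := div_nonneg (by linarith) hm.le
    have hk1 : (k:ℝ) * m ≤ b - a := by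
      have h := Nat.floor_le hba
      have := mul_le_mul_of_nonneg_right h hm.le
      calc (k:ℝ) * m ≤ (b - a) / m * m := this
        _ = b - a := by field_simp
    have hk2 : (b - a) / m < k + 1 := Nat.lt_floor_add_one _
    have h1 := hiter k a ha
    have h2 := hmono (a + k * m) b (le_trans ha (le_add_of_nonneg_right (by positivity))) (by linarith)
    have h3 : Real.exp (2 * ν * (b - a)) ≤ 2 ^ (k + 1) := by
      have hrw : 2 * ν * (b - a) = ((b - a) / m) * Real.log 2 := by
        rw [hνdef]; field_simp
      rw [hrw]
      have hle : ((b - a) / m) * Real.log 2 ≤ ((k:ℝ) + 1) * Real.log 2 :=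
        mul_le_mul_of_nonneg_right hk2.le hlog2.le
      calc Real.exp ((b - a) / m * Real.log 2) ≤ Real.exp (((k:ℝ) + 1) * Real.log 2) :=
            Real.exp_le_exp.2 hle
        _ = Real.exp (((k + 1 : ℕ):ℝ) * Real.log 2) := by push_cast; ring_nf
        _ = Real.exp (Real.log 2) ^ (k + 1) := Real.exp_nat_mul _ _
        _ = 2 ^ (k + 1) := by rw [Real.exp_log two_pos]
    have h4 := mul_le_mul_of_nonneg_right h3 (hφ0 a ha)
    calc Real.exp (2 * ν * (b - a)) * (-(L a t₀ x₀))
        ≤ 2 ^ (k + 1) * (-(L a t₀ x₀)) := h4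
      _ = 2 * (2 ^ k * (-(L a t₀ x₀))) := by ring
      _ ≤ 2 * (-(L (a + k * m) t₀ x₀)) := by linarith
      _ ≤ 2 * (-(L b t₀ x₀)) := by linarith
  have hc : ∀ a, t₀ ≤ a → c₀ * ‖E.U a t₀ x₀‖ ^ 2 ≤ -(L (a + 1) t₀ x₀) := by
    intro a ha
    have hptw : ∀ τ ∈ Set.Icc a (a + 1),
        ‖E.U a t₀ x₀‖ ^ 2 / M ^ 2 * Real.exp (-(2 * ω) * τ + 2 * ω * a)
          ≤ ‖E.U τ t₀ x₀‖ ^ 2 := by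
      intro τ hτ
      have hco := E.cocycle τ a t₀ ht₀ ha hτ.1 x₀
      have hd := hdec τ a (ht₀.trans ha) hτ.1 (E.U a t₀ x₀)
      rw [hco] at hd
      have hd' : Real.exp (-ω * (τ - a)) * ‖E.U a t₀ x₀‖ ≤ M * ‖E.U τ t₀ x₀‖ := hd
      have hsq : (Real.exp (-ω * (τ - a)) * ‖E.U a t₀ x₀‖) ^ 2
          ≤ (M * ‖E.U τ t₀ x₀‖) ^ 2 := pow_le_pow_left₀ (by positivity) hd' 2
      have hee : Real.exp (-ω * (τ - a)) ^ 2 = Real.exp (-(2 * ω) * τ + 2 * ω * a) := by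
        rw [sq, ← Real.exp_add]; ring_nf
      rw [div_mul_eq_mul_div, div_le_iff₀ (by positivity : (0:ℝ) < M ^ 2)]
      calc ‖E.U a t₀ x₀‖ ^ 2 * Real.exp (-(2 * ω) * τ + 2 * ω * a)
          = (Real.exp (-ω * (τ - a)) * ‖E.U a t₀ x₀‖) ^ 2 := by rw [mul_pow, hee]; ring
        _ ≤ (M * ‖E.U τ t₀ x₀‖) ^ 2 := hsq
        _ = ‖E.U τ t₀ x₀‖ ^ 2 * M ^ 2 := by ring
    have hcont : Continuous (fun τ : ℝ => ‖E.U a t₀ x₀‖ ^ 2 / M ^ 2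
        * Real.exp (-(2 * ω) * τ + 2 * ω * a)) :=
      continuous_const.mul (Real.continuous_exp.comp
        ((continuous_const.mul continuous_id).add continuous_const))
    have hint := intervalIntegral.integral_mono_on (by linarith : a ≤ a + 1)
      (hcont.intervalIntegrable _ _)
      (E.intInt_normSq t₀ ht₀ x₀ ha (by linarith)) hptw
    rw [intervalIntegral.integral_const_mul,
      integral_exp_linear _ _ _ _ (by intro h; nlinarith : -(2 * ω) ≠ 0)] at hint
    have hval : (Real.exp (-(2 * ω) * (a + 1) + 2 * ω * a)
          - Real.exp (-(2 * ω) * a + 2 * ω * a)) / (-(2 * ω))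
        = (1 - Real.exp (-(2 * ω))) / (2 * ω) := by
      rw [show -(2 * ω) * (a + 1) + 2 * ω * a = -(2 * ω) by ring,
        show -(2 * ω) * a + 2 * ω * a = 0 by ring, Real.exp_zero,
        div_neg, ← neg_div, neg_sub]
    rw [hval] at hint
    have heqi := hφeq a (a + 1) ha (by linarith)
    have h0 := hφ0 a ha
    have hrw : c₀ * ‖E.U a t₀ x₀‖ ^ 2
        = ‖E.U a t₀ x₀‖ ^ 2 / M ^ 2 * ((1 - Real.exp (-(2 * ω))) / (2 * ω)) := by
      rw [hc₀def]; field_simp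
    linarith
  intro s t hs hst
  rcases le_or_gt t (s + 1) with hcase | hcase
  · have hd := hdec t s (ht₀.trans hs) hst (E.U s t₀ x₀)
    rw [E.cocycle t s t₀ ht₀ hs hst x₀] at hd
    have hd' : Real.exp (-ω * (t - s)) * ‖E.U s t₀ x₀‖ ≤ M * ‖E.U t t₀ x₀‖ := hd
    have hN' : M * Real.exp (ω + ν) ≤ N := le_trans (le_max_right _ _) (le_max_left _ _)
    have e1 : Real.exp (ν * (t - s)) ≤ Real.exp ν := Real.exp_le_exp.2 (by nlinarith)
    have e2 : Real.exp (-ω) ≤ Real.exp (-ω * (t - s)) := Real.exp_le_exp.2 (by nlinarith)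
    have k2 : Real.exp (-ω) * ‖E.U s t₀ x₀‖ ≤ M * ‖E.U t t₀ x₀‖ :=
      le_trans (mul_le_mul_of_nonneg_right e2 (norm_nonneg _)) hd'
    have k3 : ‖E.U s t₀ x₀‖ ≤ Real.exp ω * (M * ‖E.U t t₀ x₀‖) := by
      have h5 := mul_le_mul_of_nonneg_left k2 (Real.exp_pos ω).le
      rw [← mul_assoc, ← Real.exp_add, show ω + -ω = 0 by ring, Real.exp_zero, one_mul] at h5
      exact h5
    calc Real.exp (ν * (t - s)) * ‖E.U s t₀ x₀‖
        ≤ Real.exp ν * ‖E.U s t₀ x₀‖ := mul_le_mul_of_nonneg_right e1 (norm_nonneg _)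
      _ ≤ Real.exp ν * (Real.exp ω * (M * ‖E.U t t₀ x₀‖)) :=
          mul_le_mul_of_nonneg_left k3 (Real.exp_pos ν).le
      _ = (M * (Real.exp ω * Real.exp ν)) * ‖E.U t t₀ x₀‖ := by ring
      _ = (M * Real.exp (ω + ν)) * ‖E.U t t₀ x₀‖ := by rw [← Real.exp_add]
      _ ≤ N * ‖E.U t t₀ x₀‖ := mul_le_mul_of_nonneg_right hN' (norm_nonneg _)
  · have h1 := hc s hs
    have h2 := hgrow (s + 1) t (by linarith) (by linarith)
    have h3 := hφm t (hs.trans hst)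
    have h4 : Real.exp (2 * ν * (t - (s + 1))) * (c₀ * ‖E.U s t₀ x₀‖ ^ 2)
        ≤ 2 * m * ‖E.U t t₀ x₀‖ ^ 2 := by
      have h5 := mul_le_mul_of_nonneg_left h1 (Real.exp_pos (2 * ν * (t - (s + 1)))).le
      linarith
    have hN1' : N₁ ≤ N := le_trans (le_max_left _ _) (le_max_left _ _)
    have hN0 : (0:ℝ) < N := lt_of_lt_of_le one_pos (le_max_right _ _)
    have hN₁sq : N₁ ^ 2 = Real.exp ν ^ 2 * (2 * m / c₀) := by
      rw [hN₁def, mul_pow, Real.sq_sqrt (by positivity)]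
    have hNsq : (Real.exp (ν * (t - s)) * ‖E.U s t₀ x₀‖) ^ 2
        ≤ (N * ‖E.U t t₀ x₀‖) ^ 2 := by
      have hsplit : Real.exp (ν * (t - s)) ^ 2
          = Real.exp ν ^ 2 * Real.exp (2 * ν * (t - (s + 1))) := by
        rw [sq, sq, ← Real.exp_add, ← Real.exp_add, ← Real.exp_add]
        congr 1; ring
      have hdiv : Real.exp (2 * ν * (t - (s + 1))) * ‖E.U s t₀ x₀‖ ^ 2
          ≤ 2 * m / c₀ * ‖E.U t t₀ x₀‖ ^ 2 := by
        rw [div_mul_eq_mul_div, le_div_iff₀ hc₀]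
        linarith [h4, (by ring : Real.exp (2 * ν * (t - (s + 1))) * (c₀ * ‖E.U s t₀ x₀‖ ^ 2)
          = Real.exp (2 * ν * (t - (s + 1))) * ‖E.U s t₀ x₀‖ ^ 2 * c₀)]
      have hNN : N₁ ^ 2 ≤ N ^ 2 := pow_le_pow_left₀ hN₁0 hN1' 2
      calc (Real.exp (ν * (t - s)) * ‖E.U s t₀ x₀‖) ^ 2
          = Real.exp ν ^ 2 * (Real.exp (2 * ν * (t - (s + 1))) * ‖E.U s t₀ x₀‖ ^ 2) := by
            rw [mul_pow, hsplit]; ring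
        _ ≤ Real.exp ν ^ 2 * (2 * m / c₀ * ‖E.U t t₀ x₀‖ ^ 2) :=
            mul_le_mul_of_nonneg_left hdiv (by positivity)
        _ = N₁ ^ 2 * ‖E.U t t₀ x₀‖ ^ 2 := by rw [hN₁sq]; ring
        _ ≤ N ^ 2 * ‖E.U t t₀ x₀‖ ^ 2 :=
            mul_le_mul_of_nonneg_right hNN (by positivity)
        _ = (N * ‖E.U t t₀ x₀‖) ^ 2 := by ring
    have ha : (0:ℝ) ≤ Real.exp (ν * (t - s)) * ‖E.U s t₀ x₀‖ := by positivity
    have hb : (0:ℝ) ≤ N * ‖E.U t t₀ x₀‖ := by positivity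
    have hs2 := Real.sqrt_le_sqrt hNsq
    rw [Real.sqrt_sq ha, Real.sqrt_sq hb] at hs2
    exact hs2

/-- Lyapunov-type characterization: `U` (with exponential decay) is weakly
exponentially unstable iff there exist a nonpositive Lyapunov function `L` for `U`
and `m > 0` such that for each `x₀` there is `t₀ ≥ 0` for which `L` solves the
Lyapunov equation and `|L(t,t₀,x₀)| ≤ m ‖U(t,t₀)x₀‖²` for all `t ≥ t₀`. -/
theorem weakExpUnstable_iff_lyapunov
    {X : Type*} [NormedAddCommGroup X] [NormedSpace ℝ X] [CompleteSpace X]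
    (E : EvolutionOperator X) (hdecay : ExpDecay E) :
    WeakExpUnstable E ↔
      ∃ L : ℝ → ℝ → X → ℝ, ∃ m : ℝ, 0 < m ∧
        (∀ t s : ℝ, ∀ x : X, 0 ≤ s → s ≤ t → L t s x ≤ 0) ∧
        ∀ x₀ : X, ∃ t₀ : ℝ, 0 ≤ t₀ ∧
          (∀ s t : ℝ, t₀ ≤ s → s ≤ t →
            L t t₀ x₀ + (∫ τ in s..t, ‖E.U τ t₀ x₀‖ ^ 2) = L s t₀ x₀) ∧
          (∀ t : ℝ, t₀ ≤ t → |L t t₀ x₀| ≤ m * ‖E.U t t₀ x₀‖ ^ 2) := by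
  constructor
  · exact fun h => fwd_aux E h
  · exact fun h => bwd_aux E hdecay h
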